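/- arXiv:2605.11357 — 6 statements merged into one kernel-verified Lean document; each statement's English description precedes it below -/
import Mathlib

section
/- Let z ∈ ℝ^K have sorted entries z_{(1)} ≥ ⋯ ≥ z_{(K)}, and let k⋆ = max{k : 1 + k·z_{(k)} > ∑_{j≤k} z_{(j)}}. Then the threshold τ of the sparsemax projection equals (∑_{j≤k⋆} z_{(j)} − 1)/k⋆, i.e., with this τ one has ∑_i max{z_i − τ, 0} = 1 and (sparsemax(z))_i = max{z_i − τ, 0}. -/
/-- `p` is the Euclidean projection of `z` onto the probability simplex `Δ^{K-1}`. -/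
def IsSparsemax {K : ℕ} (z p : Fin K → ℝ) : Prop :=
  (∀ i, 0 ≤ p i) ∧ (∑ i, p i = 1) ∧
    ∀ q : Fin K → ℝ, (∀ i, 0 ≤ q i) → (∑ i, q i = 1) →
      ∑ i, (p i - z i) ^ 2 ≤ ∑ i, (q i - z i) ^ 2

theorem sparsemax_threshold_formula {K : ℕ} (z w : Fin K → ℝ) (σ : Equiv.Perm (Fin K))
    (hw : w = z ∘ σ) (hsort : Antitone w) (kstar : Fin K)
    (hks : 1 + ((kstar : ℕ) + 1 : ℝ) * w kstar > ∑ j ∈ Finset.Iic kstar, w j)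
    (hmax : ∀ k : Fin K,
      (1 + ((k : ℕ) + 1 : ℝ) * w k > ∑ j ∈ Finset.Iic k, w j) → k ≤ kstar)
    (τ : ℝ) (hτ : τ = (∑ j ∈ Finset.Iic kstar, w j - 1) / ((kstar : ℕ) + 1))
    (p : Fin K → ℝ) (hp : IsSparsemax z p) :
    (∑ i, max (z i - τ) 0 = 1) ∧ ∀ i, p i = max (z i - τ) 0 := by
  set S : ℝ := ∑ j ∈ Finset.Iic kstar, w j with hS
  have hcpos : (0:ℝ) < ((kstar : ℕ) + 1 : ℝ) := by positivity
  have hwk : τ < w kstar := by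
    rw [hτ, div_lt_iff₀ hcpos]; linarith [hks]
  have hle : ∀ j : Fin K, j ≤ kstar → τ < w j := fun j hj =>
    lt_of_lt_of_le hwk (hsort hj)
  have hgt : ∀ j : Fin K, kstar < j → w j ≤ τ := by
    intro j hj
    have hjv : (kstar : ℕ) < (j : ℕ) := hj
    have hk' : (kstar : ℕ) + 1 < K := lt_of_le_of_lt hjv j.isLt
    set k' : Fin K := ⟨(kstar : ℕ) + 1, hk'⟩ with hk'def
    have hkk' : kstar < k' := by simp [hk'def, Fin.lt_def]
    have hsum' : ∑ i ∈ Finset.Iic k', w i = S + w k' := by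
      have h1 : Finset.Iic k' = insert k' (Finset.Iic kstar) := by
        ext i
        simp only [Finset.mem_Iic, Finset.mem_insert, Fin.le_def, Fin.ext_iff, hk'def]
        omega
      rw [h1, Finset.sum_insert (by simp [Finset.mem_Iic, Fin.le_def, hk'def])]
      ring
    have hfail : ¬ (1 + ((k' : ℕ) + 1 : ℝ) * w k' > ∑ i ∈ Finset.Iic k', w i) := by
      intro h
      exact absurd (hmax k' h) (not_le.mpr hkk')
    push_neg at hfail
    have hk'v : ((k' : ℕ) : ℝ) = (kstar : ℕ) + 1 := by simp [hk'def]
    rw [hsum', hk'v] at hfail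
    have hwk' : w k' ≤ τ := by
      rw [hτ, le_div_iff₀ hcpos]; nlinarith [hfail]
    have hk'j : k' ≤ j := by
      rw [Fin.le_def]; simpa [hk'def] using hjv
    exact (hsort hk'j).trans hwk'
  -- the sum equals 1
  have hcard : (Finset.Iic kstar).card = (kstar : ℕ) + 1 := Fin.card_Iic kstar
  have hsum1 : ∑ j, max (w j - τ) 0 = 1 := by
    have hsplit : ∑ j ∈ Finset.Iic kstar, max (w j - τ) 0
        + ∑ j ∈ (Finset.Iic kstar)ᶜ, max (w j - τ) 0 = ∑ j, max (w j - τ) 0 :=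
      Finset.sum_add_sum_compl _ _
    have h1 : ∑ j ∈ Finset.Iic kstar, max (w j - τ) 0 = S - ((kstar:ℕ)+1) * τ := by
      rw [show S - ((kstar:ℕ)+1)*τ = ∑ j ∈ Finset.Iic kstar, (w j - τ) by
        rw [Finset.sum_sub_distrib, Finset.sum_const, hcard]; ring]
      refine Finset.sum_congr rfl fun j hj => ?_
      rw [Finset.mem_Iic] at hj
      exact max_eq_left (le_of_lt (sub_pos.mpr (hle j hj)))
    have h2 : ∑ j ∈ (Finset.Iic kstar)ᶜ, max (w j - τ) 0 = 0 := by
      refine Finset.sum_eq_zero fun j hj => ?_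
      rw [Finset.mem_compl, Finset.mem_Iic] at hj
      exact max_eq_right (sub_nonpos.mpr (hgt j (not_le.mp hj)))
    rw [← hsplit, h1, h2, hτ]
    field_simp
    ring
  have hzsum : ∑ i, max (z i - τ) 0 = 1 := by
    rw [← hsum1]
    rw [hw]
    exact (Equiv.sum_comp σ (fun i => max (z i - τ) 0)).symm
  refine ⟨hzsum, ?_⟩
  -- q is the projection
  set q : Fin K → ℝ := fun i => max (z i - τ) 0 with hq
  have hq0 : ∀ i, 0 ≤ q i := fun i => le_max_right _ _
  have hq1 : ∑ i, q i = 1 := hzsum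
  have hqopt : ∀ r : Fin K → ℝ, (∀ i, 0 ≤ r i) → (∑ i, r i = 1) →
      ∑ i, (q i - z i) ^ 2 ≤ ∑ i, (r i - z i) ^ 2 := by
    intro r hr0 hr1
    have key : ∀ i, (r i - q i) * (z i - q i) ≤ τ * (r i - q i) := by
      intro i
      rcases le_or_gt (z i - τ) 0 with h | h
      · have hqi : q i = 0 := max_eq_right h
        rw [hqi]
        have : z i ≤ τ := by linarith
        nlinarith [hr0 i]
      · have hqi : q i = z i - τ := max_eq_left (le_of_lt h)
        rw [hqi]; ring_nf; rfl
    have hsum : ∑ i, (r i - q i) * (z i - q i) ≤ 0 := by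
      calc ∑ i, (r i - q i) * (z i - q i) ≤ ∑ i, τ * (r i - q i) :=
            Finset.sum_le_sum fun i _ => key i
        _ = τ * (∑ i, r i - ∑ i, q i) := by
            rw [← Finset.mul_sum, Finset.sum_sub_distrib]
        _ = 0 := by rw [hr1, hq1]; ring
    have expand : ∑ i, (r i - z i) ^ 2
        = ∑ i, (q i - z i) ^ 2 + ∑ i, (r i - q i) ^ 2
          - 2 * ∑ i, (r i - q i) * (z i - q i) := by
      rw [← Finset.sum_add_distrib, Finset.mul_sum, ← Finset.sum_sub_distrib]
      exact Finset.sum_congr rfl fun i _ => by ring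
    rw [expand]
    nlinarith [Finset.sum_nonneg (fun i (_ : i ∈ Finset.univ) => sq_nonneg (r i - q i)), hsum]
  -- uniqueness
  obtain ⟨hp0, hp1, hpopt⟩ := hp
  have hAB : ∑ i, (p i - z i) ^ 2 = ∑ i, (q i - z i) ^ 2 :=
    le_antisymm (hpopt q hq0 hq1) (hqopt p hp0 hp1)
  set m : Fin K → ℝ := fun i => (p i + q i) / 2 with hm
  have hm0 : ∀ i, 0 ≤ m i := fun i => by have := hp0 i; have := hq0 i; simp [hm]; linarith
  have hm1 : ∑ i, m i = 1 := by
    simp only [hm]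
    rw [show (fun i => (p i + q i)/2) = (fun i => (p i + q i)/2) from rfl]
    have : ∑ i, (p i + q i) / 2 = (∑ i, p i + ∑ i, q i) / 2 := by
      rw [← Finset.sum_add_distrib, Finset.sum_div]
    rw [this, hp1, hq1]; norm_num
  have hmid : ∑ i, (m i - z i) ^ 2
      = (∑ i, (p i - z i) ^ 2 + ∑ i, (q i - z i) ^ 2) / 2 - (∑ i, (p i - q i) ^ 2) / 4 := by
    rw [← Finset.sum_add_distrib, Finset.sum_div, Finset.sum_div, ← Finset.sum_sub_distrib]
    exact Finset.sum_congr rfl fun i _ => by simp only [hm]; ring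
  have hD : ∑ i, (p i - q i) ^ 2 ≤ 0 := by
    have h1 := hpopt m hm0 hm1
    rw [hmid, hAB] at h1
    linarith
  have hD0 : ∑ i, (p i - q i) ^ 2 = 0 :=
    le_antisymm hD (Finset.sum_nonneg fun i _ => sq_nonneg _)
  intro i
  have := (Finset.sum_eq_zero_iff_of_nonneg (fun i _ => sq_nonneg (p i - q i))).mp hD0 i
    (Finset.mem_univ i)
  have : p i - q i = 0 := by
    exact pow_eq_zero_iff (by norm_num) |>.mp this
  have : p i = q i := by linarith
  simpa [hq] using this
end

section
/- Let i be an honest node with neighbor set N_i in a graph with honest set H satisfying |N_i ∩ H| > |N_i ∩ B| (honest majority among neighbors, where B is the complement of H). Let D_H = max_{u,v ∈ H} ‖x_u − x_v‖_∞ be the honest diameter, let cm_i be the coordinate-wise median of all neighbor states {x_j : j ∈ N_i}, and let L_j = ‖x_j − cm_i‖_∞. Define weights p = sparsemax((−η L_j)_{j ∈ N_i}) with η > 0. Then every neighbor j with p_j > 0 satisfies L_j < D_H + 1/(η |N_i ∩ H|). -/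
/-- `m` is a median of the values `f j`, `j ∈ s`. -/
def IsMedian {ι : Type*} (s : Finset ι) (f : ι → ℝ) (m : ℝ) : Prop :=
  s.card ≤ 2 * (s.filter fun j => f j ≤ m).card ∧
  s.card ≤ 2 * (s.filter fun j => m ≤ f j).card

/-- `p` restricted to `s` is the Euclidean projection of `z` (restricted to `s`)
onto the probability simplex over `s`. -/
def IsSparsemaxOn {ι : Type*} (s : Finset ι) (z p : ι → ℝ) : Prop :=
  (∀ j ∈ s, 0 ≤ p j) ∧ (∑ j ∈ s, p j = 1) ∧
    ∀ q : ι → ℝ, (∀ j ∈ s, 0 ≤ q j) → (∑ j ∈ s, q j = 1) →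
      ∑ j ∈ s, (p j - z j) ^ 2 ≤ ∑ j ∈ s, (q j - z j) ^ 2

lemma sparsemax_exchange {ι : Type*} [DecidableEq ι] {s : Finset ι} {z p : ι → ℝ}
    (h : IsSparsemaxOn s z p) {j l : ι} (hj : j ∈ s) (hl : l ∈ s) (hpj : 0 < p j) :
    p j - z j ≤ p l - z l := by
  rcases eq_or_ne j l with rfl | hne
  · exact le_refl _
  by_contra hlt
  push_neg at hlt
  set a := (p j - z j) - (p l - z l) with ha
  have ha0 : 0 < a := by simp only [ha]; linarith
  set ε := min (p j) (a / 2) with hε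
  have hε0 : 0 < ε := lt_min hpj (by linarith)
  have hεpj : ε ≤ p j := min_le_left _ _
  have hεa : ε ≤ a / 2 := min_le_right _ _
  obtain ⟨hnn, hsum, hopt⟩ := h
  set q : ι → ℝ := fun m => if m = j then p j - ε else if m = l then p l + ε else p m with hq
  have hqj : q j = p j - ε := by simp [hq]
  have hql : q l = p l + ε := by simp [hq, hne.symm]
  have hqm : ∀ m, m ≠ j → m ≠ l → q m = p m := by
    intro m h1 h2; simp [hq, h1, h2]
  have key : ∀ F G : ι → ℝ, (∀ m, m ≠ j → m ≠ l → F m = G m) →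
      ∑ m ∈ s, F m = (∑ m ∈ s, G m) + (F j - G j) + (F l - G l) := by
    intro F G hFG
    have hl' : l ∈ s.erase j := Finset.mem_erase.mpr ⟨hne.symm, hl⟩
    rw [← Finset.add_sum_erase s F hj, ← Finset.add_sum_erase s G hj,
        ← Finset.add_sum_erase _ F hl', ← Finset.add_sum_erase _ G hl']
    have heq : ∑ m ∈ (s.erase j).erase l, F m = ∑ m ∈ (s.erase j).erase l, G m := by
      apply Finset.sum_congr rfl
      intro m hm
      have h2 := Finset.mem_erase.mp hm
      have h1 := Finset.mem_erase.mp h2.2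
      exact hFG m h1.1 h2.1
    rw [heq]; ring
  have hqnn : ∀ m ∈ s, 0 ≤ q m := by
    intro m hm
    rcases eq_or_ne m j with rfl | h1
    · rw [hqj]; linarith
    rcases eq_or_ne m l with rfl | h2
    · rw [hql]; have := hnn m hm; linarith
    · rw [hqm m h1 h2]; exact hnn m hm
  have hqsum : ∑ m ∈ s, q m = 1 := by
    rw [key q p hqm, hsum, hqj, hql]; ring
  have hle := hopt q hqnn hqsum
  have hexp : ∑ m ∈ s, (q m - z m) ^ 2 =
      (∑ m ∈ s, (p m - z m) ^ 2) + ((q j - z j) ^ 2 - (p j - z j) ^ 2)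
        + ((q l - z l) ^ 2 - (p l - z l) ^ 2) := by
    apply key
    intro m h1 h2
    rw [hqm m h1 h2]
  rw [hexp, hqj, hql] at hle
  -- hle : ∑ ≤ ∑ + stuff, so 0 ≤ stuff = 2ε(ε - a)
  nlinarith [hle, hε0, hεa, ha0]

theorem truncation_bound {V : Type*} [Fintype V] [DecidableEq V] {d : ℕ}
    (H Ni : Finset V) (i : V) (hi : i ∈ H) (x : V → Fin d → ℝ)
    (hmaj : (Ni ∩ Hᶜ).card < (Ni ∩ H).card)
    (cm : Fin d → ℝ) (hcm : ∀ k, IsMedian Ni (fun j => x j k) (cm k))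
    (η : ℝ) (hη : 0 < η)
    (p : V → ℝ) (hp : IsSparsemaxOn Ni (fun j => -η * ‖x j - cm‖) p)
    (DH : ℝ)
    (hDH : DH = (H ×ˢ H).sup' ⟨(i, i), Finset.mem_product.mpr ⟨hi, hi⟩⟩
      fun uv => ‖x uv.1 - x uv.2‖) :
    ∀ j ∈ Ni, 0 < p j → ‖x j - cm‖ < DH + 1 / (η * ((Ni ∩ H).card : ℝ)) := by
  intro j hj hpj
  obtain ⟨hnn, hsum, _⟩ := id hp
  have hub : ∀ u v, u ∈ H → v ∈ H → ‖x u - x v‖ ≤ DH := by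
    intro u v hu hv
    rw [hDH]
    have hmem : (u, v) ∈ H ×ˢ H := Finset.mem_product.mpr ⟨hu, hv⟩
    exact Finset.le_sup' (fun uv : V × V => ‖x uv.1 - x uv.2‖) hmem
  have hDH0 : 0 ≤ DH := by
    have := hub i i hi hi
    simpa using this
  have hcard : (Ni ∩ H).card + (Ni ∩ Hᶜ).card = Ni.card := by
    have : Ni ∩ Hᶜ = Ni \ H := by
      ext m; simp [Finset.mem_sdiff]
    rw [this]
    exact Finset.card_inter_add_card_sdiff Ni H
  have hm : 0 < (Ni ∩ H).card := lt_of_le_of_lt (Nat.zero_le _) hmaj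
  -- find an honest neighbor satisfying a median-side property
  have key2 : ∀ (P : V → Prop) [DecidablePred P], Ni.card ≤ 2 * (Ni.filter P).card →
      ∃ u ∈ Ni ∩ H, P u := by
    intro P _ hP
    by_contra hcon
    push_neg at hcon
    have hsub : Ni.filter P ⊆ Ni ∩ Hᶜ := by
      intro m hm'
      obtain ⟨hmN, hmP⟩ := Finset.mem_filter.mp hm'
      refine Finset.mem_inter.mpr ⟨hmN, Finset.mem_compl.mpr ?_⟩
      intro hmH
      exact hcon m (Finset.mem_inter.mpr ⟨hmN, hmH⟩) hmP
    have := Finset.card_le_card hsub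
    omega
  have honest_bound : ∀ l ∈ Ni ∩ H, ‖x l - cm‖ ≤ DH := by
    intro l hl
    obtain ⟨hlN, hlH⟩ := Finset.mem_inter.mp hl
    rw [pi_norm_le_iff_of_nonneg hDH0]
    intro k
    obtain ⟨h1, h2⟩ := hcm k
    obtain ⟨u, hu, huk⟩ := key2 (fun m => x m k ≤ cm k) h1
    obtain ⟨w, hw, hwk⟩ := key2 (fun m => cm k ≤ x m k) h2
    obtain ⟨-, huH⟩ := Finset.mem_inter.mp hu
    obtain ⟨-, hwH⟩ := Finset.mem_inter.mp hw
    have b1 : x l k - x u k ≤ DH := by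
      have h3 : ‖(x l - x u) k‖ ≤ ‖x l - x u‖ := norm_le_pi_norm _ k
      have h4 := hub l u hlH huH
      simp only [Pi.sub_apply, Real.norm_eq_abs] at h3
      calc x l k - x u k ≤ |x l k - x u k| := le_abs_self _
        _ ≤ ‖x l - x u‖ := h3
        _ ≤ DH := h4
    have b2 : x w k - x l k ≤ DH := by
      have h3 : ‖(x w - x l) k‖ ≤ ‖x w - x l‖ := norm_le_pi_norm _ k
      have h4 := hub w l hwH hlH
      simp only [Pi.sub_apply, Real.norm_eq_abs] at h3
      calc x w k - x l k ≤ |x w k - x l k| := le_abs_self _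
        _ ≤ ‖x w - x l‖ := h3
        _ ≤ DH := h4
    rw [Pi.sub_apply, Real.norm_eq_abs, abs_sub_le_iff]
    constructor <;> linarith
  -- exchange inequality summed over honest neighbors
  set z : V → ℝ := fun l => -η * ‖x l - cm‖ with hz
  have hex : ∀ l ∈ Ni ∩ H, z l - p l < z j := by
    intro l hl
    obtain ⟨hlN, -⟩ := Finset.mem_inter.mp hl
    have := sparsemax_exchange hp hj hlN hpj
    simp only [hz] at this ⊢
    linarith
  have hne : (Ni ∩ H).Nonempty := Finset.card_pos.mp hm
  have hsum1 : ∑ l ∈ Ni ∩ H, (z l - p l) < ∑ _l ∈ Ni ∩ H, z j :=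
    Finset.sum_lt_sum_of_nonempty hne hex
  have hsum2 : ∑ _l ∈ Ni ∩ H, z j = ((Ni ∩ H).card : ℝ) * z j := by
    rw [Finset.sum_const, nsmul_eq_mul]
  have hsump : ∑ l ∈ Ni ∩ H, p l ≤ 1 := by
    rw [← hsum]
    exact Finset.sum_le_sum_of_subset_of_nonneg Finset.inter_subset_left
      (fun m hm' _ => hnn m hm')
  have hsumz : ((Ni ∩ H).card : ℝ) * (-η * DH) ≤ ∑ l ∈ Ni ∩ H, z l := by
    calc ((Ni ∩ H).card : ℝ) * (-η * DH) = ∑ _l ∈ Ni ∩ H, (-η * DH) := by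
          rw [Finset.sum_const, nsmul_eq_mul]
      _ ≤ ∑ l ∈ Ni ∩ H, z l := by
          apply Finset.sum_le_sum
          intro l hl
          have := honest_bound l hl
          simp only [hz]
          nlinarith
  have hsplit : ∑ l ∈ Ni ∩ H, (z l - p l) = (∑ l ∈ Ni ∩ H, z l) - ∑ l ∈ Ni ∩ H, p l :=
    Finset.sum_sub_distrib _ _
  set c : ℝ := ((Ni ∩ H).card : ℝ) with hc
  have hc0 : 0 < c := by
    simp only [hc]
    exact_mod_cast hm
  have hmain : c * (-η * DH) - 1 < c * z j := by
    rw [hsum2] at hsum1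
    rw [hsplit] at hsum1
    linarith
  have hzj : z j = -η * ‖x j - cm‖ := rfl
  have hηc : 0 < η * c := mul_pos hη hc0
  have hinv : η * c * (1 / (η * c)) = 1 := by
    field_simp
  rw [hzj] at hmain
  have : η * c * ‖x j - cm‖ < η * c * (DH + 1 / (η * c)) := by
    rw [mul_add, hinv]
    nlinarith
  exact lt_of_mul_lt_mul_left this hηc.le
end

section
/- Under the honest-majority assumption |N_i ∩ H| > |N_i ∩ B| for each honest node i, suppose all honest nodes share a common state: x_i = x̄ for all i ∈ H, and every Byzantine neighbor k ∈ N_i ∩ B satisfies ‖x_k − x̄‖_∞ ≥ 1/(η δ_min), where δ_min = min_{i ∈ H} |N_i ∩ H| and η > 0. Then the sparsemax weights p = sparsemax((−η ‖x_j − cm_i‖_∞)_{j ∈ N_i}) assign p_j = 0 for every Byzantine neighbor j ∈ N_i ∩ B and p_j = 1/|N_i ∩ H| for every honest neighbor j ∈ N_i ∩ H. -/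
theorem weights_at_consensus {V : Type*} [Fintype V] [DecidableEq V] {d : ℕ}
    (H : Finset V) (hH : H.Nonempty) (N : V → Finset V)
    (x : V → Fin d → ℝ) (xbar : Fin d → ℝ) (η : ℝ) (hη : 0 < η)
    (hmaj : ∀ i ∈ H, (N i ∩ Hᶜ).card < (N i ∩ H).card)
    (hhonest : ∀ i ∈ H, x i = xbar)
    (δmin : ℕ) (hδ : δmin = H.inf' hH fun i => (N i ∩ H).card)
    (hbyz : ∀ i ∈ H, ∀ k ∈ N i ∩ Hᶜ, 1 / (η * (δmin : ℝ)) ≤ ‖x k - xbar‖)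
    (i : V) (hi : i ∈ H)
    (cm : Fin d → ℝ) (hcm : ∀ k, IsMedian (N i) (fun j => x j k) (cm k))
    (p : V → ℝ) (hp : IsSparsemaxOn (N i) (fun j => -η * ‖x j - cm‖) p) :
    (∀ j ∈ N i ∩ Hᶜ, p j = 0) ∧
    (∀ j ∈ N i ∩ H, p j = 1 / (((N i ∩ H).card : ℝ))) := by
  classical
  obtain ⟨hp0, hp1, hpmin⟩ := hp
  set s := N i with hs
  set A := N i ∩ H with hA
  set B := N i ∩ Hᶜ with hB
  have hdisj : Disjoint A B := by
    rw [hA, hB]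
    exact Finset.disjoint_left.2 fun a ha hb =>
      (Finset.mem_compl.1 (Finset.mem_inter.1 hb).2) (Finset.mem_inter.1 ha).2
  have hunion : A ∪ B = s := by
    rw [hA, hB, hs, ← Finset.inter_union_distrib_left, Finset.union_compl, Finset.inter_univ]
  have hab : B.card < A.card := hmaj i hi
  have hcard : s.card = A.card + B.card := by
    rw [← hunion, Finset.card_union_of_disjoint hdisj]
  have ha1 : 1 ≤ A.card := lt_of_le_of_lt (Nat.zero_le _) hab
  have haR : (0 : ℝ) < (A.card : ℝ) := by exact_mod_cast ha1
  -- cm = xbar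
  have hcmeq : cm = xbar := by
    funext k
    rcases lt_trichotomy (cm k) (xbar k) with h | h | h
    · exfalso
      have hsub : (s.filter fun j => x j k ≤ cm k) ⊆ B := by
        intro j hj
        rw [Finset.mem_filter] at hj
        have hjs : j ∈ A ∪ B := hunion ▸ hj.1
        rcases Finset.mem_union.1 hjs with hjA | hjB
        · exfalso
          have hjH : j ∈ H := (Finset.mem_inter.1 hjA).2
          have := hhonest j hjH
          rw [this] at hj
          exact absurd hj.2 (not_le.2 h)
        · exact hjB
      have h1 : s.card ≤ 2 * (s.filter fun j => x j k ≤ cm k).card := (hcm k).1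
      have h2 := Finset.card_le_card hsub
      omega
    · exact h
    · exfalso
      have hsub : (s.filter fun j => cm k ≤ x j k) ⊆ B := by
        intro j hj
        rw [Finset.mem_filter] at hj
        have hjs : j ∈ A ∪ B := hunion ▸ hj.1
        rcases Finset.mem_union.1 hjs with hjA | hjB
        · exfalso
          have hjH : j ∈ H := (Finset.mem_inter.1 hjA).2
          have := hhonest j hjH
          rw [this] at hj
          exact absurd hj.2 (not_le.2 h)
        · exact hjB
      have h1 : s.card ≤ 2 * (s.filter fun j => cm k ≤ x j k).card := (hcm k).2
      have h2 := Finset.card_le_card hsub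
      omega
  set z : V → ℝ := fun j => -η * ‖x j - cm‖ with hz
  -- z is 0 on A
  have hzA : ∀ j ∈ A, z j = 0 := by
    intro j hj
    have hjH : j ∈ H := (Finset.mem_inter.1 hj).2
    simp [hz, hhonest j hjH, hcmeq]
  -- δmin bounds
  have hδ1 : 1 ≤ δmin := by
    rw [hδ]
    apply Finset.le_inf'
    intro i' hi'
    exact lt_of_le_of_lt (Nat.zero_le _) (hmaj i' hi')
  have hδa : δmin ≤ A.card := by
    rw [hδ, hA]
    exact Finset.inf'_le _ hi
  have hδR : (0 : ℝ) < (δmin : ℝ) := by exact_mod_cast hδ1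
  -- z ≤ -(1/A.card) on B
  have hzB : ∀ j ∈ B, z j ≤ -(1 / (A.card : ℝ)) := by
    intro j hj
    have h1 : 1 / (η * (δmin : ℝ)) ≤ ‖x j - xbar‖ := hbyz i hi j hj
    have h2 : η * (1 / (η * (δmin : ℝ))) ≤ η * ‖x j - cm‖ := by
      rw [hcmeq]; exact mul_le_mul_of_nonneg_left h1 hη.le
    have h3 : η * (1 / (η * (δmin : ℝ))) = 1 / (δmin : ℝ) := by
      field_simp
    have h4 : 1 / (A.card : ℝ) ≤ 1 / (δmin : ℝ) := by
      apply one_div_le_one_div_of_le hδR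
      exact_mod_cast hδa
    have : 1 / (A.card : ℝ) ≤ η * ‖x j - cm‖ := le_trans h4 (h3 ▸ h2)
    simp only [hz]
    linarith
  set a : ℝ := (A.card : ℝ) with haa
  set q : V → ℝ := fun j => if j ∈ H then 1 / a else 0 with hq
  have hqA : ∀ j ∈ A, q j = 1 / a := by
    intro j hj
    simp [hq, (Finset.mem_inter.1 hj).2]
  have hqB : ∀ j ∈ B, q j = 0 := by
    intro j hj
    have : j ∉ H := Finset.mem_compl.1 (Finset.mem_inter.1 hj).2
    simp [hq, this]
  have hsumsplit : ∀ f : V → ℝ, ∑ j ∈ s, f j = ∑ j ∈ A, f j + ∑ j ∈ B, f j := by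
    intro f
    rw [← hunion, Finset.sum_union hdisj]
  have hq0 : ∀ j ∈ s, 0 ≤ q j := by
    intro j _
    simp only [hq]
    split
    · positivity
    · exact le_rfl
  have hq1 : ∑ j ∈ s, q j = 1 := by
    rw [hsumsplit]
    rw [Finset.sum_congr rfl hqA, Finset.sum_congr rfl hqB]
    simp [haa]
    field_simp
  -- key variational inequality
  have key : ∀ r : V → ℝ, (∀ j ∈ s, 0 ≤ r j) → (∑ j ∈ s, r j = 1) →
      0 ≤ ∑ j ∈ s, (r j - q j) * (q j - z j) := by
    intro r hr0 hr1
    rw [hsumsplit]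
    have hAeq : ∑ j ∈ A, (r j - q j) * (q j - z j)
        = (∑ j ∈ A, r j - 1) * (1 / a) := by
      rw [Finset.sum_congr rfl (fun j hj => by rw [hqA j hj, hzA j hj, sub_zero]),
        ← Finset.sum_mul, Finset.sum_sub_distrib, Finset.sum_const, nsmul_eq_mul]
      congr 2
      rw [haa]; field_simp
    have hBge : (∑ j ∈ B, r j) * (1 / a) ≤ ∑ j ∈ B, (r j - q j) * (q j - z j) := by
      rw [Finset.sum_mul]
      apply Finset.sum_le_sum
      intro j hj
      rw [hqB j hj, sub_zero, zero_sub]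
      have hrj : 0 ≤ r j := hr0 j (hunion ▸ Finset.mem_union_right A hj)
      have := hzB j hj
      nlinarith
    have hsum : ∑ j ∈ A, r j + ∑ j ∈ B, r j = 1 := by rw [← hsumsplit]; exact hr1
    have h0 : (∑ j ∈ A, r j - 1) * (1 / a) + (∑ j ∈ B, r j) * (1 / a) = 0 := by
      have h1 : ∑ j ∈ A, r j - 1 = -(∑ j ∈ B, r j) := by linarith
      rw [h1]; ring
    linarith
  -- expansion identity
  have expand : ∀ r : V → ℝ, ∑ j ∈ s, (r j - z j) ^ 2 =
      ∑ j ∈ s, (r j - q j) ^ 2 + 2 * ∑ j ∈ s, (r j - q j) * (q j - z j)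
      + ∑ j ∈ s, (q j - z j) ^ 2 := by
    intro r
    rw [Finset.mul_sum, ← Finset.sum_add_distrib, ← Finset.sum_add_distrib]
    exact Finset.sum_congr rfl fun j _ => by ring
  have hmin := hpmin q hq0 hq1
  have hkeyp := key p hp0 hp1
  have hexp := expand p
  have hsq0 : ∑ j ∈ s, (p j - q j) ^ 2 ≤ 0 := by
    simp only [hz] at hmin hexp
    linarith
  have hpq : ∀ j ∈ s, p j = q j := by
    intro j hj
    have h0 : ∑ j ∈ s, (p j - q j) ^ 2 = 0 :=
      le_antisymm hsq0 (Finset.sum_nonneg fun j _ => sq_nonneg _)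
    have := (Finset.sum_eq_zero_iff_of_nonneg (fun j _ => sq_nonneg (p j - q j))).1 h0 j hj
    have := pow_eq_zero_iff (n := 2) (by norm_num) |>.1 this
    linarith [sub_eq_zero.1 this]
  constructor
  · intro j hj
    rw [hpq j (hunion ▸ Finset.mem_union_right A hj), hqB j hj]
  · intro j hj
    rw [hpq j (hunion ▸ Finset.mem_union_left B hj), hqA j hj]
end

section
/- Let i be an honest node with honest-majority neighbors (|N_i ∩ H| ≥ |N_i ∩ B|, both nonzero counts with |N_i ∩ H| ≥ |N_i ∩ B| and |N_i ∩ H| ≥ 1). Let L_j = ‖x_j − cm_i‖_∞ be the coordinate-wise median loss, let D_H be the honest diameter in the sup-norm so that L_k ≤ D_H for all honest neighbors k, and define softmax weights p_j = e^{−η L_j}/∑_{k ∈ N_i} e^{−η L_k} with η > 0. Then ∑_{j ∈ N_i ∩ B} p_j · L_j ≤ (|N_i ∩ B| / |N_i ∩ H|) · e^{η D_H}/(η e) ≤ e^{η D_H}/(η e). -/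
theorem softmax_byzantine_influence {V : Type*} [Fintype V] [DecidableEq V] {d : ℕ}
    (H Ni : Finset V) (i : V) (hi : i ∈ H)
    (x : V → Fin d → ℝ) (cm : Fin d → ℝ)
    (hcm : ∀ k, IsMedian Ni (fun j => x j k) (cm k))
    (η : ℝ) (hη : 0 < η)
    (hmaj : (Ni ∩ Hᶜ).card ≤ (Ni ∩ H).card)
    (hHne : (Ni ∩ H).Nonempty) (hBne : (Ni ∩ Hᶜ).Nonempty)
    (DH : ℝ)
    (hDH : DH = (H ×ˢ H).sup' ⟨(i, i), Finset.mem_product.mpr ⟨hi, hi⟩⟩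
      fun uv => ‖x uv.1 - x uv.2‖)
    (hL : ∀ k ∈ Ni ∩ H, ‖x k - cm‖ ≤ DH) :
    (∑ j ∈ Ni ∩ Hᶜ,
        (Real.exp (-η * ‖x j - cm‖) / ∑ k ∈ Ni, Real.exp (-η * ‖x k - cm‖))
          * ‖x j - cm‖)
      ≤ (((Ni ∩ Hᶜ).card : ℝ) / ((Ni ∩ H).card : ℝ)) *
          (Real.exp (η * DH) / (η * Real.exp 1)) ∧
    (((Ni ∩ Hᶜ).card : ℝ) / ((Ni ∩ H).card : ℝ)) *
        (Real.exp (η * DH) / (η * Real.exp 1))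
      ≤ Real.exp (η * DH) / (η * Real.exp 1) := by
  have hcH : (0 : ℝ) < ((Ni ∩ H).card : ℝ) := by
    exact_mod_cast Finset.card_pos.mpr hHne
  set S := ∑ k ∈ Ni, Real.exp (-η * ‖x k - cm‖) with hSdef
  -- lower bound on the denominator
  have hSlb : ((Ni ∩ H).card : ℝ) * Real.exp (-η * DH) ≤ S := by
    calc ((Ni ∩ H).card : ℝ) * Real.exp (-η * DH)
        = ∑ _k ∈ Ni ∩ H, Real.exp (-η * DH) := by
          rw [Finset.sum_const, nsmul_eq_mul]
      _ ≤ ∑ k ∈ Ni ∩ H, Real.exp (-η * ‖x k - cm‖) := by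
          refine Finset.sum_le_sum fun k hk => Real.exp_le_exp.mpr ?_
          have := hL k hk
          nlinarith
      _ ≤ S := Finset.sum_le_sum_of_subset_of_nonneg Finset.inter_subset_left
          (fun _ _ _ => (Real.exp_pos _).le)
  have hSpos : 0 < S :=
    lt_of_lt_of_le (by positivity) hSlb
  -- the elementary fact x e^{-ηx} ≤ 1/(ηe)
  have key : ∀ L : ℝ, 0 ≤ L → Real.exp (-η * L) * L ≤ 1 / (η * Real.exp 1) := by
    intro L hL0
    rw [le_div_iff₀ (by positivity)]
    have h1 : η * L ≤ Real.exp (η * L - 1) := by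
      have := Real.add_one_le_exp (η * L - 1); linarith
    calc Real.exp (-η * L) * L * (η * Real.exp 1)
        = (η * L) * (Real.exp (-η * L) * Real.exp 1) := by ring
      _ = (η * L) * Real.exp (1 - η * L) := by
          rw [← Real.exp_add]; congr 1; ring
      _ ≤ Real.exp (η * L - 1) * Real.exp (1 - η * L) :=
          mul_le_mul_of_nonneg_right h1 (Real.exp_pos _).le
      _ = Real.exp (η * L - 1 + (1 - η * L)) := (Real.exp_add _ _).symm
      _ = 1 := by norm_num
  -- term-wise bound
  have hterm : ∀ j ∈ Ni ∩ Hᶜ,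
      (Real.exp (-η * ‖x j - cm‖) / S) * ‖x j - cm‖
        ≤ (1 / ((Ni ∩ H).card : ℝ)) * (Real.exp (η * DH) / (η * Real.exp 1)) := by
    intro j _
    have h1 : (Real.exp (-η * ‖x j - cm‖) / S) * ‖x j - cm‖
        = (Real.exp (-η * ‖x j - cm‖) * ‖x j - cm‖) / S := by ring
    rw [h1, div_le_iff₀ hSpos]
    have h2 : Real.exp (-η * ‖x j - cm‖) * ‖x j - cm‖ ≤ 1 / (η * Real.exp 1) :=
      key _ (norm_nonneg _)
    have h3 : (1 / ((Ni ∩ H).card : ℝ)) * (Real.exp (η * DH) / (η * Real.exp 1))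
        * (((Ni ∩ H).card : ℝ) * Real.exp (-η * DH)) = 1 / (η * Real.exp 1) := by
      field_simp
      rw [← Real.exp_add]
      simp
    calc Real.exp (-η * ‖x j - cm‖) * ‖x j - cm‖ ≤ 1 / (η * Real.exp 1) := h2
      _ = (1 / ((Ni ∩ H).card : ℝ)) * (Real.exp (η * DH) / (η * Real.exp 1))
          * (((Ni ∩ H).card : ℝ) * Real.exp (-η * DH)) := h3.symm
      _ ≤ (1 / ((Ni ∩ H).card : ℝ)) * (Real.exp (η * DH) / (η * Real.exp 1)) * S := by
          refine mul_le_mul_of_nonneg_left hSlb ?_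
          positivity
  constructor
  · calc (∑ j ∈ Ni ∩ Hᶜ, (Real.exp (-η * ‖x j - cm‖) / S) * ‖x j - cm‖)
        ≤ ∑ _j ∈ Ni ∩ Hᶜ,
            (1 / ((Ni ∩ H).card : ℝ)) * (Real.exp (η * DH) / (η * Real.exp 1)) :=
          Finset.sum_le_sum hterm
      _ = (((Ni ∩ Hᶜ).card : ℝ) / ((Ni ∩ H).card : ℝ)) *
            (Real.exp (η * DH) / (η * Real.exp 1)) := by
          rw [Finset.sum_const, nsmul_eq_mul]; ring
  · refine mul_le_of_le_one_left (by positivity) ?_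
    rw [div_le_one hcH]
    exact_mod_cast hmaj
end

section
/- Let a finite set of points {x_v}_{v ∈ N} ⊂ ℝ^d be partitioned into honest points indexed by H' = N ∩ H and Byzantine points indexed by N ∩ B, with 2|H'| > |N|. Let g be a geometric median of {x_v}_{v ∈ N}, i.e., a minimizer of x ↦ ∑_{v ∈ N} ‖x − x_v‖₂. Then for every honest index j ∈ H', ‖x_j − g‖₂ ≤ (|N| / (2|H'| − |N|)) · D, where D = max_{k,m ∈ H'} ‖x_k − x_m‖₂. -/
open scoped InnerProductSpace

lemma aux_norm_bound {E : Type*} [NormedAddCommGroup E] [InnerProductSpace ℝ E]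
    (u p : E) (t : ℝ) (hp : p ≠ 0) :
    ‖t • u - p‖ ≤ ‖p‖ - t * (⟪u, p⟫_ℝ / ‖p‖) + t ^ 2 * (‖u‖ ^ 2 / (2 * ‖p‖)) := by
  have hp' : 0 < ‖p‖ := norm_pos_iff.mpr hp
  have hsq : ‖t • u - p‖ ^ 2 = t ^ 2 * ‖u‖ ^ 2 - 2 * t * ⟪u, p⟫_ℝ + ‖p‖ ^ 2 := by
    rw [norm_sub_sq_real, norm_smul, real_inner_smul_left]
    simp [mul_pow, sq_abs]
    ring
  have key : ‖t • u - p‖ * (2 * ‖p‖) ≤ 2 * ‖p‖ ^ 2 - 2 * t * ⟪u, p⟫_ℝ + t ^ 2 * ‖u‖ ^ 2 := by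
    nlinarith [sq_nonneg (‖t • u - p‖ - ‖p‖)]
  have h2 : ‖p‖ - t * (⟪u, p⟫_ℝ / ‖p‖) + t ^ 2 * (‖u‖ ^ 2 / (2 * ‖p‖))
      = (2 * ‖p‖ ^ 2 - 2 * t * ⟪u, p⟫_ℝ + t ^ 2 * ‖u‖ ^ 2) / (2 * ‖p‖) := by
    field_simp
  rw [h2, le_div_iff₀ (by positivity)]
  exact key

theorem geometric_median_honest_bound {ι : Type*} [DecidableEq ι] {d : ℕ}
    (N Hs : Finset ι) (x : ι → EuclideanSpace ℝ (Fin d))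
    (g : EuclideanSpace ℝ (Fin d))
    (hmaj : N.card < 2 * (N ∩ Hs).card)
    (hne : (N ∩ Hs).Nonempty)
    (hg : ∀ y : EuclideanSpace ℝ (Fin d),
      ∑ v ∈ N, ‖g - x v‖ ≤ ∑ v ∈ N, ‖y - x v‖)
    (D : ℝ)
    (hD : D = ((N ∩ Hs) ×ˢ (N ∩ Hs)).sup' (hne.product hne)
      fun uv => ‖x uv.1 - x uv.2‖) :
    ∀ j ∈ N ∩ Hs,
      ‖x j - g‖ ≤ ((N.card : ℝ) / (2 * ((N ∩ Hs).card : ℝ) - (N.card : ℝ))) * D := by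
  intro j hj
  set H : Finset ι := N ∩ Hs with hHdef
  have hHN : H ⊆ N := Finset.inter_subset_left
  set n : ℝ := (N.card : ℝ) with hn
  set hc : ℝ := (H.card : ℝ) with hh
  have hhn : hc ≤ n := by rw [hn, hh]; exact_mod_cast Finset.card_le_card hHN
  have hpos : 0 < 2 * hc - n := by
    have h2 : (N.card : ℝ) < 2 * (H.card : ℝ) := by exact_mod_cast hmaj
    rw [hn, hh]; linarith
  -- distances between honest points bounded by D
  have hDk : ∀ k ∈ H, ∀ m ∈ H, ‖x k - x m‖ ≤ D := by
    intro k hk m hm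
    rw [hD]
    have hle := Finset.le_sup' (s := H ×ˢ H)
      (fun uv : ι × ι => ‖x uv.1 - x uv.2‖) (b := (k, m))
      (Finset.mem_product.mpr ⟨hk, hm⟩)
    exact hle
  have hD0 : 0 ≤ D := by
    have := hDk j hj j hj
    simpa using this
  set r : ℝ := ‖x j - g‖ with hr
  have hcoeff1 : (1 : ℝ) ≤ n / (2 * hc - n) := by
    rw [le_div_iff₀ hpos]; linarith
  by_cases hrD : r ≤ D
  · calc r ≤ D := hrD
      _ = 1 * D := (one_mul D).symm
      _ ≤ (n / (2 * hc - n)) * D := by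
          apply mul_le_mul_of_nonneg_right hcoeff1 hD0
  · push_neg at hrD
    have hr0 : 0 < r := lt_of_le_of_lt hD0 hrD
    -- all honest points differ from g
    have hpk : ∀ k ∈ H, x k - g ≠ 0 := by
      intro k hk hcontra
      have hkg : x k = g := by
        have := sub_eq_zero.mp hcontra; exact this
      have : r ≤ D := by
        rw [hr, ← hkg]
        exact hDk j hj k hk
      linarith
    have hpkpos : ∀ k ∈ H, 0 < ‖x k - g‖ := fun k hk => norm_pos_iff.mpr (hpk k hk)
    set u : EuclideanSpace ℝ (Fin d) := x j - g with hu
    set S : ℝ := ∑ k ∈ H, ⟪u, x k - g⟫_ℝ / ‖x k - g‖ with hS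
    set C : ℝ := ∑ k ∈ H, ‖u‖ ^ 2 / (2 * ‖x k - g‖) with hC
    have hC0 : 0 ≤ C := Finset.sum_nonneg fun k hk => by positivity
    clear_value S C u r hc n H
    -- main first-order inequality
    have main : ∀ t : ℝ, 0 < t → S ≤ (n - hc) * r + t * C := by
      intro t ht
      have hopt : (0:ℝ) ≤ ∑ v ∈ N, (‖g + t • u - x v‖ - ‖g - x v‖) := by
        rw [Finset.sum_sub_distrib]
        have := hg (g + t • u)
        linarith
      have hsplit : ∑ v ∈ N, (‖g + t • u - x v‖ - ‖g - x v‖)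
          = ∑ v ∈ N \ H, (‖g + t • u - x v‖ - ‖g - x v‖)
            + ∑ k ∈ H, (‖g + t • u - x k‖ - ‖g - x k‖) :=
        (Finset.sum_sdiff hHN).symm
      have hbyz : ∑ v ∈ N \ H, (‖g + t • u - x v‖ - ‖g - x v‖) ≤ (n - hc) * (t * r) := by
        have hcard : ((N \ H).card : ℝ) = n - hc := by
          rw [Finset.card_sdiff_of_subset hHN]
          rw [hn, hh]
          push_cast [Nat.cast_sub (Finset.card_le_card hHN)]
          ring
        calc ∑ v ∈ N \ H, (‖g + t • u - x v‖ - ‖g - x v‖)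
            ≤ ∑ v ∈ N \ H, t * r := by
              apply Finset.sum_le_sum
              intro v _
              have : ‖g + t • u - x v‖ ≤ ‖g - x v‖ + ‖t • u‖ := by
                have : g + t • u - x v = (g - x v) + t • u := by abel
                rw [this]; exact norm_add_le _ _
              have hnu : ‖t • u‖ = t * r := by
                rw [norm_smul, Real.norm_eq_abs, abs_of_pos ht, hr, hu]
              linarith
          _ = (n - hc) * (t * r) := by
              rw [Finset.sum_const, nsmul_eq_mul, hcard]
      have hhon : ∑ k ∈ H, (‖g + t • u - x k‖ - ‖g - x k‖)
          ≤ -(t * S) + t ^ 2 * C := by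
        rw [hS, hC, Finset.mul_sum, Finset.mul_sum, ← Finset.sum_neg_distrib,
          ← Finset.sum_add_distrib]
        apply Finset.sum_le_sum
        intro k hk
        have haux := aux_norm_bound u (x k - g) t (hpk k hk)
        have h1 : g + t • u - x k = t • u - (x k - g) := by abel
        have h2 : ‖g - x k‖ = ‖x k - g‖ := norm_sub_rev _ _
        rw [h1, h2]
        linarith
      have : 0 ≤ (n - hc) * (t * r) + (-(t * S) + t ^ 2 * C) := by
        rw [hsplit] at hopt
        linarith
      have ht2 : t * S ≤ t * ((n - hc) * r + t * C) := by nlinarith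
      exact le_of_mul_le_mul_left (by linarith [ht2]) ht
    have hSle : S ≤ (n - hc) * r := by
      apply le_of_forall_pos_le_add
      intro ε hε
      have ht : 0 < ε / (C + 1) := div_pos hε (by linarith)
      have := main (ε / (C + 1)) ht
      have htC : ε / (C + 1) * C ≤ ε := by
        rw [div_mul_eq_mul_div, div_le_iff₀ (by linarith)]
        nlinarith
      linarith
    -- per-term lower bound
    have hterm : ∀ k ∈ H, (r ^ 2 - r * D) / (r + D) ≤ ⟪u, x k - g⟫_ℝ / ‖x k - g‖ := by
      intro k hk
      have hpk' := hpkpos k hk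
      have hnorm_le : ‖x k - g‖ ≤ r + D := by
        have : x k - g = (x k - x j) + (x j - g) := by abel
        rw [this]
        calc ‖(x k - x j) + (x j - g)‖ ≤ ‖x k - x j‖ + ‖x j - g‖ := norm_add_le _ _
          _ ≤ D + r := by
              have h5 := hDk k hk j hj
              rw [hr, hu]; linarith
          _ = r + D := by ring
      have hinner : r ^ 2 - r * D ≤ ⟪u, x k - g⟫_ℝ := by
        have hdecomp : (x k - g : EuclideanSpace ℝ (Fin d)) = u + (x k - x j) := by
          rw [hu]; abel
        rw [hdecomp, inner_add_right, real_inner_self_eq_norm_sq, ← hr]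
        have hcs : |⟪u, x k - x j⟫_ℝ| ≤ ‖u‖ * ‖x k - x j‖ := abs_real_inner_le_norm _ _
        have : -(r * D) ≤ ⟪u, x k - x j⟫_ℝ := by
          have h1 : ‖u‖ * ‖x k - x j‖ ≤ r * D := by
            apply mul_le_mul _ (hDk k hk j hj) (norm_nonneg _) (le_of_lt hr0)
            rw [hr]
          have := neg_abs_le (⟪u, x k - x j⟫_ℝ)
          linarith
        linarith
      have hnum : 0 ≤ r ^ 2 - r * D := by nlinarith
      rw [div_le_div_iff₀ (by linarith) hpk']
      calc (r ^ 2 - r * D) * ‖x k - g‖ ≤ (r ^ 2 - r * D) * (r + D) :=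
            mul_le_mul_of_nonneg_left hnorm_le hnum
        _ = (r ^ 2 - r * D) * (r + D) := rfl
        _ ≤ ⟪u, x k - g⟫_ℝ * (r + D) :=
            mul_le_mul_of_nonneg_right hinner (by linarith)
    have hSlb : hc * ((r ^ 2 - r * D) / (r + D)) ≤ S := by
      rw [hS]
      calc hc * ((r ^ 2 - r * D) / (r + D))
          = ∑ _k ∈ H, (r ^ 2 - r * D) / (r + D) := by
            rw [Finset.sum_const, nsmul_eq_mul, hh]
        _ ≤ ∑ k ∈ H, ⟪u, x k - g⟫_ℝ / ‖x k - g‖ := Finset.sum_le_sum hterm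
    -- combine
    have hfinal : hc * (r ^ 2 - r * D) ≤ (n - hc) * r * (r + D) := by
      have h1 : hc * ((r ^ 2 - r * D) / (r + D)) ≤ (n - hc) * r := le_trans hSlb hSle
      have hrD' : 0 < r + D := by linarith
      rw [mul_div_assoc' , div_le_iff₀ hrD'] at h1
      linarith
    have h3 : r * (2 * hc - n) * r ≤ n * D * r := by linarith [hfinal]
    have hgoal : r * (2 * hc - n) ≤ n * D := le_of_mul_le_mul_right h3 hr0
    calc r = r * (2 * hc - n) / (2 * hc - n) := by field_simp
      _ ≤ n * D / (2 * hc - n) := by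
          apply div_le_div_of_nonneg_right hgoal hpos.le
      _ = n / (2 * hc - n) * D := by ring
end

section
/- Let i be a node whose neighbor states satisfy: all honest neighbors k ∈ N_i ∩ H have loss L_k ≤ D, and some neighbor j has loss L_j > D, where L are nonnegative reals and the weights are p = sparsemax((−η L_v)_{v ∈ N_i}) with η > 0. If p_j > 0, then p_k > 0 for every honest neighbor k, and moreover p_k ≥ −η D − τ where τ is the sparsemax threshold; consequently 1 ≥ |N_i ∩ H|·(−ηD − τ) and −ηL_j > τ together force L_j < D + 1/(η|N_i ∩ H|). -/
theorem truncation_key_step {V : Type*} [DecidableEq V]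
    (Ni Hs : Finset V) (L : V → ℝ) (hL : ∀ v, 0 ≤ L v)
    (D η : ℝ) (hη : 0 < η)
    (hne : (Ni ∩ Hs).Nonempty)
    (hhon : ∀ k ∈ Ni ∩ Hs, L k ≤ D)
    (j : V) (hj : j ∈ Ni) (hjD : D < L j)
    (p : V → ℝ) (τ : ℝ)
    (hrep : ∀ v ∈ Ni, p v = max (-η * L v - τ) 0)
    (hsum : ∑ v ∈ Ni, p v = 1)
    (hpj : 0 < p j) :
    (∀ k ∈ Ni ∩ Hs, 0 < p k ∧ -η * D - τ ≤ p k) ∧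
    ((Ni ∩ Hs).card : ℝ) * (-η * D - τ) ≤ 1 ∧
    τ < -η * L j ∧
    L j < D + 1 / (η * ((Ni ∩ Hs).card : ℝ)) := by
  have hτ : τ < -η * L j := by
    have := hrep j hj
    rw [this] at hpj
    rcases lt_or_ge 0 (-η * L j - τ) with h | h
    · linarith
    · rw [max_eq_right h] at hpj; exact absurd hpj (lt_irrefl 0)
  have hkey : ∀ k ∈ Ni ∩ Hs, 0 < p k ∧ -η * D - τ ≤ p k := by
    intro k hk
    have hkNi : k ∈ Ni := Finset.mem_inter.mp hk |>.1
    have hkD : L k ≤ D := hhon k hk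
    have h1 : -η * D - τ ≤ -η * L k - τ := by nlinarith
    have h2 : 0 < -η * D - τ := by nlinarith
    rw [hrep k hkNi]
    constructor
    · exact lt_of_lt_of_le (lt_of_lt_of_le h2 h1) (le_max_left _ _)
    · exact le_trans h1 (le_max_left _ _)
  refine ⟨hkey, ?_, hτ, ?_⟩
  all_goals
    have hcard : 0 < ((Ni ∩ Hs).card : ℝ) := by
      exact_mod_cast Finset.card_pos.mpr hne
    have hsub : (Ni ∩ Hs) ⊆ Ni := Finset.inter_subset_left
    have hbound : ((Ni ∩ Hs).card : ℝ) * (-η * D - τ) ≤ 1 := by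
      calc ((Ni ∩ Hs).card : ℝ) * (-η * D - τ)
          = ∑ _k ∈ Ni ∩ Hs, (-η * D - τ) := by
            rw [Finset.sum_const, nsmul_eq_mul]
        _ ≤ ∑ k ∈ Ni ∩ Hs, p k :=
            Finset.sum_le_sum (fun k hk => (hkey k hk).2)
        _ ≤ ∑ v ∈ Ni, p v := by
            refine Finset.sum_le_sum_of_subset_of_nonneg hsub ?_
            intro v hv _
            rw [hrep v hv]; exact le_max_right _ _
        _ = 1 := hsum
  · exact hbound
  · have hpos : 0 < η * ((Ni ∩ Hs).card : ℝ) := mul_pos hη hcard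
    have h3 : η * (L j - D) < -η * D - τ := by nlinarith
    have h5 : L j - D < 1 / (η * ((Ni ∩ Hs).card : ℝ)) := by
      rw [lt_div_iff₀ hpos]; nlinarith
    linarith
end
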